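/- There exist normalised 2-head Büchi transducers 𝒯 and 𝒯' with R(𝒯) ⊆ R(𝒯') (in fact R(𝒯) = R(𝒯')) such that Spoiler wins the two-buffer simulation game 𝒯 vs 𝒯' for all buffer capacities (k1,k2) ∈ (ℕ ∪ {ω})²; i.e., two-buffer simulation is an incomplete approximation of relation inclusion. -/

import Mathlib

open scoped Classical

/-- A Büchi automaton over alphabet `S`. -/
structure BA (S : Type) where
  Q : Type
  init : Q
  trans : Q → S → Q → Prop
  acc : Q → Prop

/-- The Büchi language of `A`: infinite words with a run from the initial state
visiting accepting states infinitely often. -/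
def BA.Lang {S : Type} (A : BA S) : Set (ℕ → S) :=
  { w | ∃ ρ : ℕ → A.Q, ρ 0 = A.init ∧ (∀ n, A.trans (ρ n) (w n) (ρ (n+1))) ∧
        ∀ n, ∃ m, n ≤ m ∧ A.acc (ρ m) }

/-- A configuration of the two-buffer simulation game: Spoiler's state, contents of
the two FIFO buffers (head = oldest letter), Duplicator's state. -/
structure Cfg {S : Type} (A B : BA S) where
  qa : A.Q
  b1 : List S
  b2 : List S
  qb : B.Q

/-- The configuration after Spoiler's move `m = (a, q')`: his state becomes `q'` and
the letter `a` is appended to buffer `σ a` (`true` = buffer 1, `false` = buffer 2). -/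
def midCfg {S : Type} {A B : BA S} (σ : S → Bool) (c : Cfg A B) (m : S × A.Q) : Cfg A B :=
  ⟨m.2, if σ m.1 then c.b1 ++ [m.1] else c.b1, if σ m.1 then c.b2 else c.b2 ++ [m.1], c.qb⟩

/-- Applying a finite sequence of Duplicator consumption steps: each step picks a buffer
(`true` = buffer 1) and a successor state, consuming the oldest letter of that buffer
along a matching transition of `B`.  Returns `none` if some step is illegal. -/
noncomputable def dupApply {S : Type} (A B : BA S) :
    Cfg A B → List (Bool × B.Q) → Option (Cfg A B)
  | c, [] => some c
  | c, (j, p') :: ms =>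
    if j then
      match c.b1 with
      | [] => none
      | b :: β => if B.trans c.qb b p' then dupApply A B ⟨c.qa, β, c.b2, p'⟩ ms else none
    else
      match c.b2 with
      | [] => none
      | b :: β => if B.trans c.qb b p' then dupApply A B ⟨c.qa, c.b1, β, p'⟩ ms else none

/-- The configuration at the start of round `n` (i.e. after Duplicator's moves of
round `n-1`), given Spoiler's moves `sp` and Duplicator's responses `dm`;
`none` once an illegal move has occurred. -/
noncomputable def playCfg {S : Type} (A B : BA S) (σ : S → Bool)
    (sp : ℕ → S × A.Q) (dm : ℕ → List (Bool × B.Q)) : ℕ → Option (Cfg A B)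
  | 0 => some ⟨A.init, [], [], B.init⟩
  | n+1 =>
    match playCfg A B σ sp dm n with
    | none => none
    | some c =>
      if A.trans c.qa (sp n).1 (sp n).2 then dupApply A B (midCfg σ c (sp n)) (dm n) else none

/-- Number of letters put into buffer `j` by Spoiler during the first `n` rounds. -/
noncomputable def pushed {S : Type} {QA : Type} (σ : S → Bool) (sp : ℕ → S × QA)
    (j : Bool) (n : ℕ) : ℕ :=
  ((Finset.range n).filter fun i => σ (sp i).1 = j).card

/-- Number of letters consumed from buffer `j` by Duplicator during the first `n` rounds. -/
noncomputable def consumed {QB : Type} (dm : ℕ → List (Bool × QB)) (j : Bool) (n : ℕ) : ℕ :=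
  ∑ i ∈ Finset.range n, ((dm i).filter fun x => x.1 = j).length

/-- Duplicator's strategy is consistent with the moves `dm` of a play. -/
def Consistent {S : Type} (A B : BA S)
    (dstrat : List ((S × A.Q) × List (Bool × B.Q)) → (S × A.Q) → List (Bool × B.Q))
    (sp : ℕ → S × A.Q) (dm : ℕ → List (Bool × B.Q)) : Prop :=
  ∀ n, dm n = dstrat (List.ofFn fun i : Fin n => (sp i, dm i)) (sp n)

/-- Spoiler's moves are legal as long as the play is defined. -/
def SpLegal {S : Type} (A B : BA S) (σ : S → Bool)
    (sp : ℕ → S × A.Q) (dm : ℕ → List (Bool × B.Q)) : Prop :=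
  ∀ n c, playCfg A B σ sp dm n = some c → A.trans c.qa (sp n).1 (sp n).2

/-- Duplicator's winning condition for a play of the two-buffer game with
capacities `(k1, k2)`: the buffers never exceed their capacities (checked after her
moves), and either Spoiler's run visits accepting states only finitely often, or
every letter put into a buffer is eventually consumed and Duplicator's run visits
accepting states infinitely often. -/
def Win2 {S : Type} (A B : BA S) (σ : S → Bool) (k1 k2 : ℕ∞)
    (sp : ℕ → S × A.Q) (dm : ℕ → List (Bool × B.Q)) : Prop :=
  (∀ n c, playCfg A B σ sp dm n = some c →
      (c.b1.length : ℕ∞) ≤ k1 ∧ (c.b2.length : ℕ∞) ≤ k2) ∧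
  ((∃ N, ∀ n, N ≤ n → ¬ A.acc (sp n).2) ∨
    ((∀ n j, ∃ m, pushed σ sp j n ≤ consumed dm j m) ∧
     (∀ n, ∃ m, n ≤ m ∧ ∃ x ∈ dm m, B.acc x.2)))

/-- `dstrat` is a winning strategy for Duplicator in the two-buffer simulation game on
`A`, `B` with letter distribution `σ` and capacities `(k1, k2)`: against every legal
behaviour of Spoiler, all of Duplicator's prescribed moves are legal (the play never
breaks) and the resulting play is won by Duplicator. -/
def WinningStrat2 {S : Type} (A B : BA S) (σ : S → Bool) (k1 k2 : ℕ∞)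
    (dstrat : List ((S × A.Q) × List (Bool × B.Q)) → (S × A.Q) → List (Bool × B.Q)) : Prop :=
  ∀ sp dm, Consistent A B dstrat sp dm → SpLegal A B σ sp dm →
    (∀ n, (playCfg A B σ sp dm n).isSome) ∧ Win2 A B σ k1 k2 sp dm

/-- Two-buffer simulation `A ⊑(k1,k2) B`: Duplicator has a winning strategy. -/
def Sim2 {S : Type} (A B : BA S) (σ : S → Bool) (k1 k2 : ℕ∞) : Prop :=
  ∃ dstrat, WinningStrat2 A B σ k1 k2 dstrat
/-- The concatenation of the infinite sequence of finite words `g 0, g 1, g 2, …`,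
as a finite or infinite word represented by a function `ℕ → Option α`
(`iConcat g k = some a` iff the concatenation has an `k`-th letter and it is `a`). -/
noncomputable def iConcat {α : Type} (g : ℕ → List α) : ℕ → Option α := fun k =>
  if h : ∃ m, k < ((List.range m).map g).flatten.length
  then ((List.range h.choose).map g).flatten[k]?
  else none

/-- The projection of an infinite word `w` onto the letters of buffer index `j`
(i.e. onto the sub-alphabet `σ⁻¹(j)`), as a finite or infinite word. -/
noncomputable def projW {S : Type} (σ : S → Bool) (j : Bool) (w : ℕ → S) : ℕ → Option S :=
  iConcat fun n => if σ (w n) = j then [w n] else []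
/-- A 2-head Büchi transducer with input alphabet `Si` and output alphabet `So`. -/
structure Trd (Si So : Type) where
  Q : Type
  init : Q
  delta : Set (Q × List Si × List So × Q)
  acc : Q → Prop

/-- A transducer is normalised if every transition consumes exactly one letter,
either from the input or from the output alphabet. -/
def Trd.Normalised {Si So : Type} (T : Trd Si So) : Prop :=
  ∀ t ∈ T.delta, (∃ a, t.2.1 = [a] ∧ t.2.2.1 = []) ∨ (t.2.1 = [] ∧ ∃ b, t.2.2.1 = [b])

/-- The infinitary rational relation recognised by `T`: pairs of finite-or-infinite
words `(u, v)` obtained by concatenating the input parts and the output parts of an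
accepting run. -/
def Trd.Rel {Si So : Type} (T : Trd Si So) : Set ((ℕ → Option Si) × (ℕ → Option So)) :=
  { p | ∃ (ρ : ℕ → T.Q) (us : ℕ → List Si) (vs : ℕ → List So),
      ρ 0 = T.init ∧ (∀ n, (ρ n, us n, vs n, ρ (n+1)) ∈ T.delta) ∧
      (∀ n, ∃ m, n ≤ m ∧ T.acc (ρ m)) ∧ p.1 = iConcat us ∧ p.2 = iConcat vs }

/-- A (normalised) transducer viewed as a Büchi automaton over `Si ⊕ So`. -/
def Trd.toBA {Si So : Type} (T : Trd Si So) : BA (Si ⊕ So) where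
  Q := T.Q
  init := T.init
  trans := fun q x q' =>
    match x with
    | Sum.inl a => (q, [a], [], q') ∈ T.delta
    | Sum.inr b => (q, [], [b], q') ∈ T.delta
  acc := T.acc


namespace Sim2Cex

inductive QA | s0 | s1
deriving DecidableEq

inductive QB | t0 | t1 | t2
deriving DecidableEq

abbrev S := Unit ⊕ Bool

noncomputable def bl : S := Sum.inr true
noncomputable def cl : S := Sum.inr false

/-- Spoiler's transducer: `s0 →b s0`, `s0 →c s1`, `s1 →c s1`, all states accepting. -/
@[reducible] noncomputable def T : Trd Unit Bool where
  Q := QA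
  init := .s0
  delta := {(.s0, [], [true], .s0), (.s0, [], [false], .s1), (.s1, [], [false], .s1)}
  acc := fun _ => True

/-- Duplicator's transducer: `t0 →b t0`, `t0 →b t1`, `t1 →b t1`, `t0 →c t2`,
`t2 →c t2`; accepting states `t1`, `t2`. -/
@[reducible] noncomputable def T' : Trd Unit Bool where
  Q := QB
  init := .t0
  delta := {(.t0, [], [true], .t0), (.t0, [], [true], .t1), (.t1, [], [true], .t1),
            (.t0, [], [false], .t2), (.t2, [], [false], .t2)}
  acc := fun q => q ≠ .t0

lemma T_norm : T.Normalised := by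
  intro t ht
  simp only [T, Set.mem_insert_iff, Set.mem_singleton_iff] at ht
  rcases ht with h | h | h <;> subst h <;> exact Or.inr ⟨rfl, _, rfl⟩

lemma T'_norm : T'.Normalised := by
  intro t ht
  simp only [T', Set.mem_insert_iff, Set.mem_singleton_iff] at ht
  rcases ht with h | h | h | h | h <;> subst h <;> exact Or.inr ⟨rfl, _, rfl⟩

lemma rel_eq : T.Rel = T'.Rel := by
  ext ⟨u, v⟩
  constructor
  · rintro ⟨ρ, us, vs, h0, ht, ha, hu, hv⟩
    have h0' : ρ 0 = QA.s0 := h0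
    have hpers : ∀ n, ρ n = QA.s1 → ρ (n+1) = QA.s1 := by
      intro n hn
      have := ht n
      simp only [T, Set.mem_insert_iff, Set.mem_singleton_iff, Prod.mk.injEq] at this
      rcases this with ⟨h1, _⟩ | ⟨h1, _⟩ | ⟨_, _, _, h4⟩
      · rw [hn] at h1; exact absurd h1 (by simp)
      · rw [hn] at h1; exact absurd h1 (by simp)
      · exact h4
    have hpers' : ∀ m k, ρ m = QA.s1 → ρ (m + k) = QA.s1 := by
      intro m k hm
      induction k with
      | zero => exact hm
      | succ k ih => exact hpers _ ih
    by_cases hP : ∃ m, ρ m = QA.s1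
    · refine ⟨fun n => if ρ n = QA.s1 then QB.t2 else QB.t0, us, vs, ?_, ?_, ?_, hu, hv⟩
      · simp [h0', T']
      · intro n
        have := ht n
        simp only [T, Set.mem_insert_iff, Set.mem_singleton_iff, Prod.mk.injEq] at this
        rcases this with ⟨h1, h2, h3, h4⟩ | ⟨h1, h2, h3, h4⟩ | ⟨h1, h2, h3, h4⟩ <;>
          simp only [h1, h2, h3, h4] <;>
          simp [T', Set.mem_insert_iff]
      · intro n
        obtain ⟨m, hm⟩ := hP
        refine ⟨max n m, le_max_left _ _, ?_⟩
        have : ρ (max n m) = QA.s1 := by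
          have := hpers' m (max n m - m) hm
          rwa [Nat.add_sub_cancel' (le_max_right n m)] at this
        simp [T', Trd.acc, this]
    · refine ⟨fun n => if n = 0 then QB.t0 else QB.t1, us, vs, by simp [T'], ?_, ?_, hu, hv⟩
      · intro n
        have := ht n
        simp only [T, Set.mem_insert_iff, Set.mem_singleton_iff, Prod.mk.injEq] at this
        rcases this with ⟨h1, h2, h3, h4⟩ | ⟨h1, h2, h3, h4⟩ | ⟨h1, h2, h3, h4⟩
        · cases n with
          | zero => simp only [h2, h3]; simp [T', Set.mem_insert_iff]
          | succ k => simp only [h2, h3]; simp [T', Set.mem_insert_iff]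
        · exact absurd ⟨n+1, h4⟩ hP
        · exact absurd ⟨n+1, h4⟩ hP
      · intro n
        refine ⟨n + 1, Nat.le_succ n, ?_⟩
        simp [T', Trd.acc]
  · rintro ⟨ρ, us, vs, h0, ht, ha, hu, hv⟩
    have h0' : ρ 0 = QB.t0 := h0
    refine ⟨fun n => if ρ n = QB.t2 then QA.s1 else QA.s0, us, vs, by simp [h0', T], ?_,
      fun n => ⟨n, le_refl n, trivial⟩, hu, hv⟩
    intro n
    have := ht n
    simp only [T', Set.mem_insert_iff, Set.mem_singleton_iff, Prod.mk.injEq] at this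
    rcases this with ⟨h1, h2, h3, h4⟩ | ⟨h1, h2, h3, h4⟩ | ⟨h1, h2, h3, h4⟩ |
      ⟨h1, h2, h3, h4⟩ | ⟨h1, h2, h3, h4⟩ <;>
      simp only [h1, h2, h3, h4] <;> simp [T, Set.mem_insert_iff]

noncomputable abbrev A : BA S := ⟨QA, T.toBA.init, T.toBA.trans, T.toBA.acc⟩
noncomputable abbrev B : BA S := ⟨QB, T'.toBA.init, T'.toBA.trans, T'.toBA.acc⟩
noncomputable abbrev sg : S → Bool := fun x => x.isLeft

abbrev DS := List ((S × QA) × List (Bool × QB)) → (S × QA) → List (Bool × QB)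

noncomputable def spstep (h : List ((S × QA) × List (Bool × QB))) : S × QA :=
  if ∃ p ∈ h, ∃ x ∈ p.2, x.2 ≠ QB.t0 then (cl, QA.s1) else (bl, QA.s0)

noncomputable def hist (ds : DS) : ℕ → List ((S × QA) × List (Bool × QB))
  | 0 => []
  | n+1 => hist ds n ++ [(spstep (hist ds n), ds (hist ds n) (spstep (hist ds n)))]

noncomputable def sp (ds : DS) (n : ℕ) : S × QA := spstep (hist ds n)
noncomputable def dm (ds : DS) (n : ℕ) : List (Bool × QB) := ds (hist ds n) (sp ds n)

def trig (ds : DS) (n : ℕ) : Prop := ∃ p ∈ hist ds n, ∃ x ∈ p.2, x.2 ≠ QB.t0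

lemma sp_eq (ds : DS) (n : ℕ) :
    sp ds n = if trig ds n then (cl, QA.s1) else (bl, QA.s0) := by
  simp [sp, spstep, trig]

lemma hist_eq (ds : DS) : ∀ n, hist ds n = List.ofFn (fun i : Fin n => (sp ds i, dm ds i))
  | 0 => by simp [hist]
  | n+1 => by
    rw [List.ofFn_succ']
    simp only [Fin.coe_castSucc, Fin.val_last, List.concat_eq_append]
    rw [← hist_eq ds n]
    rfl

lemma trig_succ (ds : DS) (n : ℕ) :
    trig ds (n+1) ↔ trig ds n ∨ ∃ x ∈ dm ds n, x.2 ≠ QB.t0 := by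
  simp only [trig, hist, List.mem_append, List.mem_singleton]
  constructor
  · rintro ⟨p, hp | hp, hx⟩
    · exact Or.inl ⟨p, hp, hx⟩
    · subst hp; exact Or.inr hx
  · rintro (⟨p, hp, hx⟩ | hx)
    · exact ⟨p, Or.inl hp, hx⟩
    · exact ⟨_, Or.inr rfl, hx⟩

lemma trig_mono (ds : DS) {m n : ℕ} (h : m ≤ n) (ht : trig ds m) : trig ds n := by
  induction n with
  | zero => obtain rfl := Nat.le_zero.mp h; exact ht
  | succ k ih =>
    rcases Nat.lt_or_ge m (k+1) with hlt | hge
    · exact (trig_succ ds k).2 (Or.inl (ih (by omega)))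
    · have : m = k + 1 := by omega
      subst this; exact ht

lemma dupApply_true_cons (qa : QA) (b2 : List S) (qb p' : QB) (ms : List (Bool × QB))
    (b : S) (β : List S) :
    dupApply A B ⟨qa, b :: β, b2, qb⟩ ((true, p') :: ms) =
      if B.trans qb b p' then dupApply A B ⟨qa, β, b2, p'⟩ ms else none := by
  simp [dupApply]

lemma dupApply_true_nil (qa : QA) (b2 : List S) (qb p' : QB) (ms : List (Bool × QB)) :
    dupApply A B ⟨qa, [], b2, qb⟩ ((true, p') :: ms) = none := by
  simp [dupApply]

lemma dupApply_false_cons (qa : QA) (b1 : List S) (qb p' : QB) (ms : List (Bool × QB))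
    (b : S) (β : List S) :
    dupApply A B ⟨qa, b1, b :: β, qb⟩ ((false, p') :: ms) =
      if B.trans qb b p' then dupApply A B ⟨qa, b1, β, p'⟩ ms else none := by
  simp [dupApply]

lemma dupApply_false_nil (qa : QA) (b1 : List S) (qb p' : QB) (ms : List (Bool × QB)) :
    dupApply A B ⟨qa, b1, [], qb⟩ ((false, p') :: ms) = none := by
  simp [dupApply]

lemma dupApply_qa : ∀ (l : List (Bool × QB)) (c c' : Cfg A B),
    dupApply A B c l = some c' → c'.qa = c.qa := by
  intro l
  induction l with
  | nil =>
    intro c c' h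
    simp only [dupApply, Option.some_inj] at h
    rw [← h]
  | cons x ms ih =>
    rintro ⟨qa, b1, b2, qb⟩ c' h
    obtain ⟨j, p⟩ := x
    cases j with
    | true =>
      cases b1 with
      | nil => rw [dupApply_true_nil] at h; exact absurd h (by simp)
      | cons b β =>
        rw [dupApply_true_cons] at h
        by_cases htr : B.trans qb b p
        · rw [if_pos htr] at h; exact ih ⟨qa, β, b2, p⟩ c' h
        · rw [if_neg htr] at h; exact absurd h (by simp)
    | false =>
      cases b2 with
      | nil => rw [dupApply_false_nil] at h; exact absurd h (by simp)
      | cons b β =>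
        rw [dupApply_false_cons] at h
        by_cases htr : B.trans qb b p
        · rw [if_pos htr] at h; exact ih ⟨qa, b1, β, p⟩ c' h
        · rw [if_neg htr] at h; exact absurd h (by simp)

lemma trans_b (q p : QB) : B.trans q bl p ↔
    (q = QB.t0 ∧ p = QB.t0) ∨ (q = QB.t0 ∧ p = QB.t1) ∨ (q = QB.t1 ∧ p = QB.t1) := by
  show (q, ([] : List Unit), [true], p) ∈ T'.delta ↔ _
  simp [T', Set.mem_insert_iff, Prod.mk.injEq]

lemma trans_c (q p : QB) : B.trans q cl p ↔
    (q = QB.t0 ∧ p = QB.t2) ∨ (q = QB.t2 ∧ p = QB.t2) := by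
  show (q, ([] : List Unit), [false], p) ∈ T'.delta ↔ _
  simp [T', Set.mem_insert_iff, Prod.mk.injEq]

/-- Core analysis of Duplicator's consumption steps on a buffer `b^p c^q`. -/
lemma DA : ∀ (l : List (Bool × QB)) (p q : ℕ) (qa : QA) (qb : QB),
    qb ≠ QB.t2 → (0 < q → qb = QB.t1) →
    ∀ c', dupApply A B ⟨qa, [], List.replicate p bl ++ List.replicate q cl, qb⟩ l = some c' →
    ∃ k, k ≤ p ∧ c'.b1 = [] ∧
      c'.b2 = List.replicate (p - k) bl ++ List.replicate q cl ∧
      c'.qb ≠ QB.t2 ∧ (0 < q → c'.qb = QB.t1) ∧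
      (qb = QB.t1 → c'.qb = QB.t1) ∧
      ((∃ x ∈ l, x.2 ≠ QB.t0) → c'.qb = QB.t1) ∧
      (l.filter fun x => x.1 = false).length = k := by
  intro l
  induction l with
  | nil =>
    intro p q qa qb h2 hq c' h
    simp only [dupApply, Option.some_inj] at h
    subst h
    exact ⟨0, Nat.zero_le _, rfl, by simp, h2, hq, fun h => h, by simp, by simp⟩
  | cons x ms ih =>
    rintro p q qa qb h2 hq c' h
    obtain ⟨j, p'⟩ := x
    cases j with
    | true =>
      rw [dupApply_true_nil] at h
      exact absurd h (by simp)
    | false =>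
      cases hp : p with
      | zero =>
        cases hq2 : q with
        | zero =>
          subst hp; subst hq2
          simp only [List.replicate_zero, List.nil_append] at h
          rw [dupApply_false_nil] at h
          exact absurd h (by simp)
        | succ q'' =>
          subst hp; subst hq2
          simp only [List.replicate_zero, List.nil_append, List.replicate_succ] at h
          rw [dupApply_false_cons] at h
          have hqb : qb = QB.t1 := hq (Nat.succ_pos _)
          by_cases htr : B.trans qb cl p'
          · rw [trans_c] at htr
            rcases htr with ⟨h1, _⟩ | ⟨h1, _⟩ <;> simp [hqb] at h1
          · rw [if_neg htr] at h; exact absurd h (by simp)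
      | succ p2 =>
        subst hp
        simp only [List.replicate_succ, List.cons_append] at h
        rw [dupApply_false_cons] at h
        by_cases htr : B.trans qb bl p'
        · rw [if_pos htr] at h
          rw [trans_b] at htr
          have hp'ne : p' ≠ QB.t2 := by
            rcases htr with ⟨_, h1⟩ | ⟨_, h1⟩ | ⟨_, h1⟩ <;> simp [h1]
          have hp'q : 0 < q → p' = QB.t1 := by
            intro hq0
            have hqb := hq hq0
            rcases htr with ⟨h1, _⟩ | ⟨h1, _⟩ | ⟨_, h1⟩
            · rw [hqb] at h1; exact absurd h1 (by simp)
            · rw [hqb] at h1; exact absurd h1 (by simp)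
            · exact h1
          obtain ⟨k, hk, hb1, hb2, hne, hqpos, hpers, hex, hflt⟩ :=
            ih p2 q qa p' hp'ne hp'q c' h
          refine ⟨k + 1, by omega, hb1, ?_, hne, hqpos, ?_, ?_, ?_⟩
          · rw [hb2]; congr 2; omega
          · intro hq1
            rcases htr with ⟨h1, _⟩ | ⟨h1, _⟩ | ⟨_, h1⟩
            · rw [hq1] at h1; exact absurd h1 (by simp)
            · rw [hq1] at h1; exact absurd h1 (by simp)
            · exact hpers h1
          · rintro ⟨y, hy, hyne⟩
            rcases List.mem_cons.1 hy with rfl | hy'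
            · have hp1 : p' = QB.t1 := by
                rcases htr with ⟨_, h1⟩ | ⟨_, h1⟩ | ⟨_, h1⟩
                · exact absurd h1 hyne
                · exact h1
                · exact h1
              exact hpers hp1
            · exact hex ⟨y, hy', hyne⟩
          · rw [List.filter_cons_of_pos (by simp), List.length_cons, hflt]
        · rw [if_neg htr] at h; exact absurd h (by simp)

lemma transA_b : A.trans QA.s0 bl QA.s0 := by
  show (QA.s0, ([] : List Unit), [true], QA.s0) ∈ T.delta
  simp [T, Set.mem_insert_iff]

lemma transA_c (q : QA) : A.trans q cl QA.s1 := by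
  cases q
  · show (QA.s0, ([] : List Unit), [false], QA.s1) ∈ T.delta
    simp [T, Set.mem_insert_iff]
  · show (QA.s1, ([] : List Unit), [false], QA.s1) ∈ T.delta
    simp [T, Set.mem_insert_iff]

lemma playCfg_succ (spf : ℕ → S × QA) (dmf : ℕ → List (Bool × QB)) (n : ℕ) (c0 : Cfg A B)
    (hpn : playCfg A B sg spf dmf n = some c0) :
    playCfg A B sg spf dmf (n+1) =
      if A.trans c0.qa (spf n).1 (spf n).2 then dupApply A B (midCfg sg c0 (spf n)) (dmf n)
      else none := by
  rw [playCfg, hpn]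

lemma playCfg_succ_none (spf : ℕ → S × QA) (dmf : ℕ → List (Bool × QB)) (n : ℕ)
    (hpn : playCfg A B sg spf dmf n = none) :
    playCfg A B sg spf dmf (n+1) = none := by
  rw [playCfg, hpn]

lemma not_sim (k1 k2 : ℕ∞) : ¬ Sim2 A B sg k1 k2 := by
  rintro ⟨ds, hW⟩
  have hcons : Consistent A B ds (sp ds) (dm ds) := by
    intro n
    rw [← hist_eq ds n]
    rfl
  -- the spoiler-state invariant
  have hqa : ∀ n c, playCfg A B sg (sp ds) (dm ds) n = some c →
      (¬ trig ds n → c.qa = QA.s0) := by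
    intro n
    induction n with
    | zero =>
      intro c hc _
      simp only [playCfg, Option.some_inj] at hc
      subst hc
      rfl
    | succ n ihn =>
      intro c hc hnt
      cases hpn : playCfg A B sg (sp ds) (dm ds) n with
      | none => rw [playCfg_succ_none _ _ n hpn] at hc; exact absurd hc (by simp)
      | some c0 =>
        rw [playCfg_succ _ _ n c0 hpn] at hc
        by_cases htr : A.trans c0.qa (sp ds n).1 (sp ds n).2
        · rw [if_pos htr] at hc
          have h1 := dupApply_qa _ _ _ hc
          have hnt' : ¬ trig ds n := fun h => hnt (trig_mono ds (Nat.le_succ n) h)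
          rw [h1]
          show (sp ds n).2 = QA.s0
          rw [sp_eq, if_neg hnt']
        · rw [if_neg htr] at hc; exact absurd hc (by simp)
  have hleg : SpLegal A B sg (sp ds) (dm ds) := by
    intro n c hc
    by_cases ht : trig ds n
    · rw [sp_eq, if_pos ht]
      show A.trans c.qa cl QA.s1
      exact transA_c c.qa
    · rw [sp_eq, if_neg ht]
      show A.trans c.qa bl QA.s0
      rw [hqa n c hc ht]
      exact transA_b
  obtain ⟨hsome, hbnd, hdisj⟩ := hW (sp ds) (dm ds) hcons hleg
  have hnotfin : ¬ ∃ N, ∀ n, N ≤ n → ¬ A.acc (sp ds n).2 := by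
    rintro ⟨N, hN⟩
    exact hN N le_rfl True.intro
  rcases hdisj with hfin | ⟨hconsume, hacc⟩
  · exact hnotfin hfin
  have htrig : ∃ n, trig ds n := by
    obtain ⟨m, _, x, hx, hxacc⟩ := hacc 0
    exact ⟨m + 1, (trig_succ ds m).2 (Or.inr ⟨x, hx, hxacc⟩)⟩
  set n0 := Nat.find htrig with hn0def
  have htrig_iff : ∀ n, trig ds n ↔ n0 ≤ n := by
    intro n
    constructor
    · intro h; exact Nat.find_le h
    · intro h; exact trig_mono ds h (Nat.find_spec htrig)
  have hd : ∀ n, consumed (dm ds) false (n+1) =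
      consumed (dm ds) false n + ((dm ds n).filter fun x => x.1 = false).length := by
    intro n
    exact Finset.sum_range_succ _ n
  have INV : ∀ n c, playCfg A B sg (sp ds) (dm ds) n = some c →
      consumed (dm ds) false n ≤ min n n0 ∧ c.b1 = [] ∧
      c.b2 = List.replicate (min n n0 - consumed (dm ds) false n) bl ++
        List.replicate (n - n0) cl ∧
      c.qb ≠ QB.t2 ∧ (n0 ≤ n → c.qb = QB.t1) := by
    intro n
    induction n with
    | zero =>
      intro c hc
      simp only [playCfg, Option.some_inj] at hc
      subst hc
      have hn00 : ¬ n0 ≤ 0 := by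
        intro h
        have h2 := (htrig_iff 0).2 h
        simp [trig, hist] at h2
      refine ⟨by simp [consumed], rfl, by simp [consumed], ?_, fun h => absurd h hn00⟩
      show QB.t0 ≠ QB.t2
      simp
    | succ n ihn =>
      intro c hc
      cases hpn : playCfg A B sg (sp ds) (dm ds) n with
      | none => rw [playCfg_succ_none _ _ n hpn] at hc; exact absurd hc (by simp)
      | some c0 =>
        rw [playCfg_succ _ _ n c0 hpn] at hc
        obtain ⟨hdle, hb1, hb2, hqbne, hqbt⟩ := ihn c0 hpn
        by_cases htr : A.trans c0.qa (sp ds n).1 (sp ds n).2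
        swap
        · rw [if_neg htr] at hc; exact absurd hc (by simp)
        rw [if_pos htr] at hc
        by_cases hT : trig ds n
        · -- triggered round: Spoiler plays `cl`
          have hn0n : n0 ≤ n := (htrig_iff n).1 hT
          rw [sp_eq, if_pos hT] at hc
          have hmid : midCfg sg c0 (cl, QA.s1) =
              (⟨QA.s1, c0.b1, c0.b2 ++ [cl], c0.qb⟩ : Cfg A B) := by
            simp [midCfg, sg, cl]
          rw [hmid, hb1, hb2] at hc
          have hbuf : (List.replicate (min n n0 - consumed (dm ds) false n) bl ++
                List.replicate (n - n0) cl) ++ [cl] =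
              List.replicate (min n n0 - consumed (dm ds) false n) bl ++
                List.replicate (n - n0 + 1) cl := by
            rw [List.append_assoc]
            congr 1
            rw [List.replicate_succ']
          rw [hbuf] at hc
          have hqb1 : c0.qb = QB.t1 := hqbt hn0n
          obtain ⟨k, hk, hcb1, hcb2, hcne, hcpos, hcpers, hcex, hcflt⟩ :=
            DA (dm ds n) (min n n0 - consumed (dm ds) false n) (n - n0 + 1)
              QA.s1 c0.qb hqbne (fun _ => hqb1) c hc
          have hmin : min n n0 = n0 := min_eq_right hn0n
          have hmin' : min (n+1) n0 = n0 := min_eq_right (by omega)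
          have hdsucc : consumed (dm ds) false (n+1) = consumed (dm ds) false n + k := by
            rw [hd n, hcflt]
          refine ⟨by omega, hcb1, ?_, hcne, fun _ => hcpos (by omega)⟩
          rw [hcb2, hdsucc, hmin, hmin']
          congr 2
          · omega
          · omega
        · -- untriggered round: Spoiler plays `bl`
          have hnn0 : ¬ n0 ≤ n := fun hh => hT ((htrig_iff n).2 hh)
          rw [sp_eq, if_neg hT] at hc
          have hmid : midCfg sg c0 (bl, QA.s0) =
              (⟨QA.s0, c0.b1, c0.b2 ++ [bl], c0.qb⟩ : Cfg A B) := by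
            simp [midCfg, sg, bl]
          rw [hmid, hb1, hb2] at hc
          have hnn : n - n0 = 0 := by omega
          have hminn : min n n0 = n := min_eq_left (by omega)
          have hbuf : (List.replicate (min n n0 - consumed (dm ds) false n) bl ++
                List.replicate (n - n0) cl) ++ [bl] =
              List.replicate (min n n0 - consumed (dm ds) false n + 1) bl ++
                List.replicate 0 cl := by
            rw [hnn]
            simp [List.replicate_succ']
          rw [hbuf] at hc
          obtain ⟨k, hk, hcb1, hcb2, hcne, hcpos, hcpers, hcex, hcflt⟩ :=
            DA (dm ds n) (min n n0 - consumed (dm ds) false n + 1) 0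
              QA.s0 c0.qb hqbne (by omega) c hc
          have hdsucc : consumed (dm ds) false (n+1) = consumed (dm ds) false n + k := by
            rw [hd n, hcflt]
          have hminn' : min (n+1) n0 = n + 1 := min_eq_left (by omega)
          refine ⟨by omega, hcb1, ?_, hcne, ?_⟩
          · rw [hcb2, hdsucc, hminn', hminn]
            have h1 : n + 1 - n0 = 0 := by omega
            rw [h1]
            congr 2
            omega
          · intro hsucc
            have htrigsucc : trig ds (n+1) := (htrig_iff (n+1)).2 hsucc
            rcases (trig_succ ds n).1 htrigsucc with h | h
            · exact absurd h hT
            · exact hcex h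
  -- conclusion: buffer-2 consumption is bounded by `n0` but `n0 + 1` letters must be matched
  obtain ⟨m, hm⟩ := hconsume (n0 + 1) false
  have hpush : pushed sg (sp ds) false (n0 + 1) = n0 + 1 := by
    unfold pushed
    rw [Finset.filter_true_of_mem, Finset.card_range]
    intro i _
    rw [sp_eq]
    split <;> rfl
  rw [hpush] at hm
  obtain ⟨c, hc⟩ := Option.isSome_iff_exists.mp (hsome m)
  have hinv := (INV m c hc).1
  omega

end Sim2Cex

/-- There are normalised 2-head Büchi transducers `𝒯`, `𝒯'` with
`R(𝒯) = R(𝒯')` (so in particular `R(𝒯) ⊆ R(𝒯')`) such that Spoiler wins the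
two-buffer simulation game on `𝒯`, `𝒯'` for all buffer capacities: two-buffer
simulation is an incomplete approximation of relation inclusion. -/
theorem sim2_incomplete_for_relation_inclusion :
    ∃ (T T' : Trd Unit Bool),
      T.Normalised ∧ T'.Normalised ∧ T.Rel = T'.Rel ∧
      ∀ k1 k2 : ℕ∞, ¬ Sim2 T.toBA T'.toBA (fun x => x.isLeft) k1 k2 := by
  exact ⟨Sim2Cex.T, Sim2Cex.T', Sim2Cex.T_norm, Sim2Cex.T'_norm, Sim2Cex.rel_eq,
    fun k1 k2 => Sim2Cex.not_sim k1 k2⟩
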